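/- Let H be a graph with δ(H) ≥ 1 having a d-sequence {H = ℋ₁,…,ℋ_s} with partial sums z_i(H) = Σ_{j=2}^i (m_j + 1 − d_j), and set Z = min{z_i(H) : 2 ≤ i ≤ s}; suppose Z ≤ 0. Let G = H + K_{1,k} be the disjoint union of H with a star K_{1,k}. If k ≥ d_H − Z, then str(G) = |V(G)| + 1. -/

import Mathlib

open Finset

/-- A numbering of a graph of order `Fintype.card V` is a bijection onto `{1, …, card V}`. -/
def IsNumbering {V : Type*} [Fintype V] (f : V → ℕ) : Prop :=
  Set.BijOn f Set.univ (Set.Icc 1 (Fintype.card V))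

/-- The strength `str_f` of a numbering `f` of `G`: the maximum of `f u + f v` over edges. -/
noncomputable def strOf {V : Type*} [Fintype V] (G : SimpleGraph V) (f : V → ℕ) : ℕ :=
  sSup {n | ∃ u v, G.Adj u v ∧ n = f u + f v}

/-- The strength of a graph: the minimum over all numberings `f` of `str_f`. -/
noncomputable def strength {V : Type*} [Fintype V] (G : SimpleGraph V) : ℕ :=
  sInf {n | ∃ f : V → ℕ, IsNumbering f ∧ strOf G f = n}

open scoped Classical

/-- Degree of `v` inside the induced subgraph on `S`. -/
noncomputable def degIn {V : Type*} (G : SimpleGraph V) (S : Finset V) (v : V) : ℕ :=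
  (S.filter fun w => G.Adj v w).card

/-- The isolated vertices of the induced subgraph on `S`. -/
noncomputable def isolSet {V : Type*} (G : SimpleGraph V) (S : Finset V) : Finset V :=
  S.filter fun v => ∀ w ∈ S, ¬ G.Adj v w

/-- The non-isolated part of the induced subgraph on `S`. -/
noncomputable def core {V : Type*} (G : SimpleGraph V) (S : Finset V) : Finset V :=
  S \ isolSet G S

/-- The induced subgraph on `S` is terminal iff it is of the form `mK₁` with `m ≥ 1`, or
`mK₁ + K_r` with `m ≥ 0`, `r ≥ 2`. -/
def Terminal {V : Type*} (G : SimpleGraph V) (S : Finset V) : Prop :=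
  (core G S = ∅ ∧ S.Nonempty) ∨
    (2 ≤ (core G S).card ∧ ∀ v ∈ core G S, ∀ w ∈ core G S, v ≠ w → G.Adj v w)

/-- A d-sequence `𝒢₁, …, 𝒢ₛ` of `G`: `𝒢ᵢ` is the induced subgraph of `G` on `S i`
(so `𝒢ᵢ = mᵢK₁ + Gᵢ` where `Gᵢ` is induced on `core G (S i)`), `𝒢₁ = G`, and as long as
`𝒢ᵢ` is not terminal, `𝒢_{i+1}` is obtained from `Gᵢ` by deleting the chosen vertex `u i`
together with all of its neighbors. -/
structure DSeq {V : Type*} [Fintype V] (G : SimpleGraph V) where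
  s : ℕ
  hs : 1 ≤ s
  S : ℕ → Finset V
  u : ℕ → V
  first : S 1 = Finset.univ
  mem_u : ∀ i, 1 ≤ i → i < s → u i ∈ core G (S i)
  not_terminal : ∀ i, 1 ≤ i → i < s → ¬ Terminal G (S i)
  step : ∀ i, 1 ≤ i → i < s →
    S (i + 1) = (core G (S i)).filter fun w => w ≠ u i ∧ ¬ G.Adj (u i) w
  terminal : Terminal G (S s)

namespace DSeq

variable {V : Type*} [Fintype V] {G : SimpleGraph V}

/-- `mᵢ`, the number of isolated vertices of `𝒢ᵢ`. -/
noncomputable def m (D : DSeq G) (i : ℕ) : ℕ := (isolSet G (D.S i)).card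

/-- `dᵢ`, the degree in `Gᵢ` of the deleted vertex `u i` (for `i < s`); at the terminal
index it is the minimum degree of `Gₛ` (so `0` if `𝒢ₛ = mₛK₁`, and `r - 1` if `Gₛ = K_r`). -/
noncomputable def d (D : DSeq G) (i : ℕ) : ℕ :=
  if i < D.s then degIn G (D.S i) (D.u i)
  else if h : (core G (D.S i)).Nonempty then (core G (D.S i)).inf' h (degIn G (D.S i)) else 0

/-- The partial sums `z_i = Σ_{j=2}^i (m_j + 1 - d_j)`. -/
noncomputable def z (D : DSeq G) (i : ℕ) : ℤ :=
  ∑ j ∈ Finset.Icc 2 i, ((D.m j : ℤ) + 1 - (D.d j : ℤ))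

/-- A δ-sequence is a d-sequence in which every chosen vertex has minimum degree in `Gᵢ`. -/
def IsDeltaSeq (D : DSeq G) : Prop :=
  ∀ i, 1 ≤ i → i < D.s → ∀ w ∈ core G (D.S i), degIn G (D.S i) (D.u i) ≤ degIn G (D.S i) w

end DSeq

/-- The star `K_{1,k}`: its centre (`none`) is joined to each of the `k` leaves. -/
def starGraph (k : ℕ) : SimpleGraph (Option (Fin k)) where
  Adj x y :=
    match x, y with
    | none, none => False
    | none, some _ => True
    | some _, none => True
    | some _, some _ => False
  symm := by
    constructor
    rintro (_ | a) (_ | b) h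
    · exact h
    · trivial
    · trivial
    · exact h
  loopless := by
    constructor
    rintro (_ | a) h <;> exact h

/-! ### Auxiliary lemmas for the main theorem -/

section ListAux

open List

lemma indexOf_map_inl {A B : Type*} [DecidableEq A] [inst : DecidableEq (A ⊕ B)]
    (x : A) (l : List A) :
    @List.idxOf (A ⊕ B) (@instBEqOfDecidableEq (A ⊕ B) inst) (Sum.inl x) (l.map Sum.inl)
      = l.idxOf x := by
  induction l with
  | nil => rfl
  | cons hd tl ih =>
    rw [List.map_cons]
    by_cases h : hd = x
    · subst h
      simp [List.idxOf_cons]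
    · simp [List.idxOf_cons, h, ih]

lemma len_flatMap {β : Type*} (B : ℕ → List β) (n : ℕ) :
    ((List.range n).flatMap B).length = ∑ t ∈ Finset.range n, (B t).length := by
  induction n with
  | zero => simp
  | succ n ih => simp [List.range_succ, Finset.sum_range_succ, ih]

lemma flatMap_prefix {β : Type*} (B : ℕ → List β) {j n : ℕ} (h : j ≤ n) :
    ∃ rest, (List.range n).flatMap B = (List.range j).flatMap B ++ rest := by
  obtain ⟨c, rfl⟩ := Nat.exists_eq_add_of_le h
  exact ⟨_, by rw [List.range_add, List.flatMap_append]⟩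

lemma flatMap_block {β : Type*} (B : ℕ → List β) {j n : ℕ} (h : j < n) :
    ∃ rest, (List.range n).flatMap B = (List.range j).flatMap B ++ (B j ++ rest) := by
  obtain ⟨rest, hr⟩ := flatMap_prefix B (Nat.succ_le_of_lt h)
  refine ⟨rest, ?_⟩
  rw [hr, List.range_succ, List.flatMap_append, List.append_assoc]
  simp

lemma singleton_of_mem_short {β : Type*} {l : List β} {y : β}
    (hy : y ∈ l) (hl : l.length ≤ 1) : l = [y] := by
  match l with
  | [] => simp at hy
  | [a] => simp_all
  | a :: b :: t => simp at hl

lemma range_shift_sum (g : ℕ → ℕ) (n : ℕ) (h : 1 ≤ n) :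
    ∑ t ∈ Finset.range n, g (t+1) = g 1 + ∑ j ∈ Finset.Icc 2 n, g j := by
  induction n with
  | zero => omega
  | succ n ih =>
    rcases Nat.lt_or_ge n 1 with h1 | h1
    · interval_cases n
      · simp
    · rw [Finset.sum_range_succ, ih h1, Finset.sum_Icc_succ_top (by omega)]
      ring

end ListAux

section DSeqAux

variable {α : Type*} [Fintype α] {H : SimpleGraph α}

/-- Neighbors of `u i` inside `S i`. -/
noncomputable def NBk (D : DSeq H) (i : ℕ) : Finset α :=
  (D.S i).filter fun w => H.Adj (D.u i) w

lemma mem_NBk {D : DSeq H} {i : ℕ} {v : α} :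
    v ∈ NBk D i ↔ v ∈ D.S i ∧ H.Adj (D.u i) v := by
  unfold NBk
  exact Finset.mem_filter

lemma mem_core_iff {T : Finset α} {v : α} :
    v ∈ core H T ↔ v ∈ T ∧ v ∉ isolSet H T := Finset.mem_sdiff

lemma mem_isolSet {T : Finset α} {v : α} :
    v ∈ isolSet H T ↔ v ∈ T ∧ ∀ w ∈ T, ¬ H.Adj v w := by
  unfold isolSet
  rw [Finset.filter_congr_decidable]
  exact Finset.mem_filter

lemma isol_not_adj {T : Finset α} {v w : α} (hv : v ∈ isolSet H T) (hw : w ∈ T) :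
    ¬ H.Adj v w := (mem_isolSet.mp hv).2 w hw

lemma isolSet_subset {T : Finset α} : isolSet H T ⊆ T := by
  unfold isolSet
  rw [Finset.filter_congr_decidable]
  exact Finset.filter_subset _ _

lemma core_subset {T : Finset α} : core H T ⊆ T := Finset.sdiff_subset

lemma mem_S_succ (D : DSeq H) {i : ℕ} (h1 : 1 ≤ i) (h2 : i < D.s) {v : α} :
    v ∈ D.S (i+1) ↔ v ∈ core H (D.S i) ∧ v ≠ D.u i ∧ ¬ H.Adj (D.u i) v := by
  rw [D.step i h1 h2, Finset.mem_filter]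

lemma S_succ_sub (D : DSeq H) {i : ℕ} (h1 : 1 ≤ i) (h2 : i < D.s) :
    D.S (i+1) ⊆ D.S i := fun v hv =>
  core_subset ((mem_S_succ D h1 h2).mp hv).1

lemma S_sub (D : DSeq H) {j : ℕ} (hj : 1 ≤ j) :
    ∀ i, j ≤ i → i ≤ D.s → D.S i ⊆ D.S j := by
  intro i
  induction i with
  | zero => intro h; omega
  | succ n ih =>
    intro hji his
    rcases Nat.eq_or_lt_of_le hji with h | h
    · rw [h]
    · have hn1 : 1 ≤ n := by omega
      exact (S_succ_sub D hn1 (by omega)).trans (ih (by omega) (by omega))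

lemma u_mem_core (D : DSeq H) {i : ℕ} (h1 : 1 ≤ i) (h2 : i < D.s) :
    D.u i ∈ core H (D.S i) := D.mem_u i h1 h2

lemma u_mem_S (D : DSeq H) {i : ℕ} (h1 : 1 ≤ i) (h2 : i < D.s) :
    D.u i ∈ D.S i := core_subset (u_mem_core D h1 h2)

lemma u_not_isol (D : DSeq H) {i : ℕ} (h1 : 1 ≤ i) (h2 : i < D.s) :
    D.u i ∉ isolSet H (D.S i) := (mem_core_iff.mp (u_mem_core D h1 h2)).2

lemma d_eq (D : DSeq H) {i : ℕ} (h1 : 1 ≤ i) (h2 : i < D.s) :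
    D.d i = (NBk D i).card := by
  unfold DSeq.d
  rw [if_pos h2]
  rfl

lemma NBk_sub_core (D : DSeq H) {i : ℕ} (h1 : 1 ≤ i) (h2 : i < D.s) :
    NBk D i ⊆ core H (D.S i) := by
  intro v hv
  obtain ⟨hvS, hadj⟩ := mem_NBk.mp hv
  refine mem_core_iff.mpr ⟨hvS, fun hiso => ?_⟩
  exact isol_not_adj hiso (u_mem_S D h1 h2) hadj.symm

lemma S_step_sdiff (D : DSeq H) {i : ℕ} (h1 : 1 ≤ i) (h2 : i < D.s) :
    D.S (i+1) = D.S i \ (isolSet H (D.S i) ∪ {D.u i} ∪ NBk D i) := by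
  ext v
  rw [mem_S_succ D h1 h2, mem_core_iff]
  simp only [Finset.mem_sdiff, Finset.mem_union, Finset.mem_singleton, mem_NBk]
  tauto

lemma card_step (D : DSeq H) {i : ℕ} (h1 : 1 ≤ i) (h2 : i < D.s) :
    (D.S i).card = D.m i + 1 + D.d i + (D.S (i+1)).card := by
  have hsub : isolSet H (D.S i) ∪ {D.u i} ∪ NBk D i ⊆ D.S i := by
    intro v hv
    rcases Finset.mem_union.mp hv with hv | hv
    · rcases Finset.mem_union.mp hv with hv | hv
      · exact isolSet_subset hv
      · rw [Finset.mem_singleton.mp hv]; exact u_mem_S D h1 h2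
    · exact (mem_NBk.mp hv).1
  have hd1 : Disjoint (isolSet H (D.S i)) {D.u i} := by
    rw [Finset.disjoint_singleton_right]
    exact u_not_isol D h1 h2
  have hd2 : Disjoint (isolSet H (D.S i) ∪ {D.u i}) (NBk D i) := by
    rw [Finset.disjoint_left]
    intro v hv hvN
    have hcore := NBk_sub_core D h1 h2 hvN
    rcases Finset.mem_union.mp hv with hv | hv
    · exact (mem_core_iff.mp hcore).2 hv
    · rw [Finset.mem_singleton.mp hv] at hvN
      exact H.loopless.irrefl _ (mem_NBk.mp hvN).2
  have hcard : (D.S (i+1)).card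
      = (D.S i).card - ((isolSet H (D.S i)).card + 1 + (NBk D i).card) := by
    rw [S_step_sdiff D h1 h2, Finset.card_sdiff_of_subset hsub,
      Finset.card_union_of_disjoint hd2, Finset.card_union_of_disjoint hd1,
      Finset.card_singleton]
  have hle : (isolSet H (D.S i)).card + 1 + (NBk D i).card ≤ (D.S i).card := by
    rw [← Finset.card_singleton (D.u i), ← Finset.card_union_of_disjoint hd1,
      ← Finset.card_union_of_disjoint hd2]
    exact Finset.card_le_card hsub
  have hm : D.m i = (isolSet H (D.S i)).card := rfl
  have hd : D.d i = (NBk D i).card := d_eq D h1 h2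
  omega

lemma card_telescope (D : DSeq H) :
    ∀ n, n + 1 ≤ D.s →
      Fintype.card α = ∑ t ∈ Finset.range n, (D.m (t+1) + 1 + D.d (t+1)) + (D.S (n+1)).card := by
  intro n
  induction n with
  | zero =>
    intro _
    rw [D.first, Finset.card_univ]
    simp
  | succ n ih =>
    intro h
    rw [Finset.sum_range_succ]
    have hrec := ih (by omega)
    have hstep := card_step D (i := n+1) (by omega) (by omega)
    omega

lemma clique_of_terminal (D : DSeq H) (h : (core H (D.S D.s)).Nonempty) :
    2 ≤ (core H (D.S D.s)).card ∧
      ∀ v ∈ core H (D.S D.s), ∀ w ∈ core H (D.S D.s), v ≠ w → H.Adj v w := by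
  rcases D.terminal with ⟨h1, _⟩ | h2
  · rw [h1] at h; exact absurd h (by simp)
  · exact h2

lemma d_s_empty (D : DSeq H) (h : core H (D.S D.s) = ∅) : D.d D.s = 0 := by
  unfold DSeq.d
  rw [if_neg (lt_irrefl _), dif_neg (by simp [h])]

lemma degIn_clique (D : DSeq H) (h : (core H (D.S D.s)).Nonempty) {v : α}
    (hv : v ∈ core H (D.S D.s)) :
    degIn H (D.S D.s) v = (core H (D.S D.s)).card - 1 := by
  obtain ⟨-, hcl⟩ := clique_of_terminal D h
  have hvS : v ∈ D.S D.s := core_subset hv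
  have hfil : (D.S D.s).filter (fun w => H.Adj v w) = (core H (D.S D.s)).erase v := by
    ext w
    simp only [Finset.mem_filter, Finset.mem_erase]
    constructor
    · rintro ⟨hwS, hadj⟩
      refine ⟨fun e => by rw [e] at hadj; exact H.loopless.irrefl _ hadj, ?_⟩
      refine mem_core_iff.mpr ⟨hwS, fun hiso => ?_⟩
      exact isol_not_adj hiso hvS hadj.symm
    · rintro ⟨hne, hwc⟩
      exact ⟨core_subset hwc, hcl v hv w hwc (Ne.symm hne)⟩
  unfold degIn
  rw [Finset.filter_congr_decidable, hfil, Finset.card_erase_of_mem hv]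

lemma d_s_clique (D : DSeq H) (h : (core H (D.S D.s)).Nonempty) :
    D.d D.s = (core H (D.S D.s)).card - 1 := by
  unfold DSeq.d
  rw [if_neg (lt_irrefl _), dif_pos h]
  apply le_antisymm
  · have h' := h
    obtain ⟨v, hv⟩ := h'
    exact le_trans (Finset.inf'_le _ hv) (le_of_eq (degIn_clique D h hv))
  · apply Finset.le_inf'
    intro b hb
    rw [degIn_clique D h hb]

lemma card_S_s (D : DSeq H) :
    (D.S D.s).card = D.m D.s + (core H (D.S D.s)).card := by
  have hsub : isolSet H (D.S D.s) ⊆ D.S D.s := isolSet_subset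
  have h1 : (core H (D.S D.s)).card = (D.S D.s).card - (isolSet H (D.S D.s)).card :=
    Finset.card_sdiff_of_subset hsub
  have h2 := Finset.card_le_card hsub
  have hm : D.m D.s = (isolSet H (D.S D.s)).card := rfl
  omega

lemma card_core_sub_one (D : DSeq H) :
    (core H (D.S D.s)).card - 1 = D.d D.s := by
  rcases Finset.eq_empty_or_nonempty (core H (D.S D.s)) with he | hne
  · rw [he, d_s_empty D he]; simp
  · rw [d_s_clique D hne]

end DSeqAux
section KI

variable {α : Type*} [Fintype α] {H : SimpleGraph α}

lemma ki (D : DSeq H) {Z : ℤ}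
    (hZ : IsLeast {z | ∃ i, 2 ≤ i ∧ i ≤ D.s ∧ z = D.z i} Z)
    (hZ0 : Z ≤ 0) {k : ℕ} (hk : (D.d 1 : ℤ) - Z ≤ (k : ℤ)) :
    ∀ n, 1 ≤ n → n ≤ D.s →
      ∑ t ∈ Finset.range n, D.d (t+1) ≤ k + (n-1) + ∑ t ∈ Finset.range n, D.m (t+1) := by
  intro n h1 hn
  have hd1k : (D.d 1 : ℤ) ≤ (k : ℤ) := by linarith
  rcases Nat.eq_or_lt_of_le h1 with h | h2
  · subst h
    simp only [Finset.sum_range_one, Nat.zero_add]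
    have : D.d 1 ≤ k := by exact_mod_cast hd1k
    omega
  · have h2 : 2 ≤ n := h2
    have hzn : Z ≤ D.z n := hZ.2 ⟨n, h2, hn, rfl⟩
    have hcard : (Finset.Icc 2 n).card = n - 1 := by
      rw [Nat.card_Icc]
      omega
    have hzval : D.z n =
        (∑ j ∈ Finset.Icc 2 n, (D.m j : ℤ)) + ((n : ℤ) - 1)
          - ∑ j ∈ Finset.Icc 2 n, (D.d j : ℤ) := by
      unfold DSeq.z
      rw [Finset.sum_sub_distrib, Finset.sum_add_distrib, Finset.sum_const, hcard,
        nsmul_eq_mul, mul_one]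
      omega
    have hkey : (D.d 1 : ℤ) + ∑ j ∈ Finset.Icc 2 n, (D.d j : ℤ)
        ≤ (k : ℤ) + ((n : ℤ) - 1) + ∑ j ∈ Finset.Icc 2 n, (D.m j : ℤ) := by
      have : (D.d 1 : ℤ) ≤ (k : ℤ) + D.z n := by linarith
      rw [hzval] at this
      linarith
    rw [range_shift_sum (fun j => D.d j) n h1, range_shift_sum (fun j => D.m j) n h1]
    zify
    have hmm : (0 : ℤ) ≤ (D.m 1 : ℤ) := by positivity
    have hcast : ((n - 1 : ℕ) : ℤ) = (n : ℤ) - 1 := by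
      push_cast [Nat.cast_sub (by omega : 1 ≤ n)]; ring
    rw [hcast]
    linarith

end KI

section Lists

open List

variable {α : Type*} [Fintype α] {H : SimpleGraph α}

/-- The list of vertices of `H` receiving small labels. -/
noncomputable def lowA (D : DSeq H) : List α :=
  ((List.range (D.s - 1)).flatMap fun t => (NBk D (t+1)).toList)
    ++ ((core H (D.S D.s)).toList.drop 1)

/-- The list of vertices of `H` receiving large labels (in decreasing label order). -/
noncomputable def highA (D : DSeq H) : List α :=
  ((List.range (D.s - 1)).flatMap fun t => (isolSet H (D.S (t+1))).toList ++ [D.u (t+1)])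
    ++ (isolSet H (D.S D.s)).toList ++ ((core H (D.S D.s)).toList.take 1)

lemma length_lowA (D : DSeq H) :
    (lowA D).length = ∑ t ∈ Finset.range (D.s - 1), D.d (t+1) + D.d D.s := by
  unfold lowA
  rw [List.length_append, len_flatMap, List.length_drop, Finset.length_toList]
  congr 1
  · apply Finset.sum_congr rfl
    intro t ht
    rw [Finset.length_toList, d_eq D (by omega) (by have := Finset.mem_range.mp ht; omega)]
  · exact card_core_sub_one D

lemma length_highA (D : DSeq H) :
    (highA D).length = (∑ t ∈ Finset.range (D.s - 1), D.m (t+1)) + (D.s - 1) + D.m D.s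
      + min 1 (core H (D.S D.s)).card := by
  unfold highA
  rw [List.length_append, List.length_append, len_flatMap, List.length_take,
    Finset.length_toList, Finset.length_toList]
  have : ∀ t ∈ Finset.range (D.s - 1),
      ((isolSet H (D.S (t+1))).toList ++ [D.u (t+1)]).length = D.m (t+1) + 1 := by
    intro t _
    rw [List.length_append, Finset.length_toList]
    rfl
  rw [Finset.sum_congr rfl this, Finset.sum_add_distrib, Finset.sum_const, Finset.card_range,
    smul_eq_mul, mul_one]
  have hm : D.m D.s = (isolSet H (D.S D.s)).card := rfl
  omega

lemma length_total (D : DSeq H) :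
    (lowA D).length + (highA D).length = Fintype.card α := by
  obtain ⟨n, hn⟩ : ∃ n, D.s = n + 1 := ⟨D.s - 1, by have := D.hs; omega⟩
  have ht := card_telescope D n (by omega)
  rw [← hn] at ht
  have hss : (D.S D.s).card = D.m D.s + (core H (D.S D.s)).card := card_S_s D
  have hC : (core H (D.S D.s)).card = D.d D.s + min 1 (core H (D.S D.s)).card := by
    have h1 := card_core_sub_one D
    rcases Finset.eq_empty_or_nonempty (core H (D.S D.s)) with he | hne
    · rw [he] at h1 ⊢; simp at h1 ⊢; omega
    · have := Finset.card_pos.mpr hne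
      omega
  have hsplit : ∑ t ∈ Finset.range n, (D.m (t+1) + 1 + D.d (t+1))
      = (∑ t ∈ Finset.range n, D.m (t+1)) + n + ∑ t ∈ Finset.range n, D.d (t+1) := by
    rw [Finset.sum_add_distrib, Finset.sum_add_distrib, Finset.sum_const, Finset.card_range,
      smul_eq_mul, mul_one]
  have hn1 : D.s - 1 = n := by omega
  rw [length_lowA, length_highA, hn1]
  omega

lemma length_ineq (D : DSeq H) {Z : ℤ}
    (hZ : IsLeast {z | ∃ i, 2 ≤ i ∧ i ≤ D.s ∧ z = D.z i} Z)
    (hZ0 : Z ≤ 0) {k : ℕ} (hk : (D.d 1 : ℤ) - Z ≤ (k : ℤ)) :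
    (lowA D).length + min 1 (core H (D.S D.s)).card ≤ k + (highA D).length := by
  obtain ⟨n, hn⟩ : ∃ n, D.s = n + 1 := ⟨D.s - 1, by have := D.hs; omega⟩
  have hki := ki D hZ hZ0 hk D.s D.hs le_rfl
  have hdecomp : ∑ t ∈ Finset.range D.s, D.d (t+1)
      = ∑ t ∈ Finset.range (D.s - 1), D.d (t+1) + D.d D.s := by
    rw [hn, Finset.sum_range_succ]
    simp
  have hdecomp2 : ∑ t ∈ Finset.range D.s, D.m (t+1)
      = ∑ t ∈ Finset.range (D.s - 1), D.m (t+1) + D.m D.s := by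
    rw [hn, Finset.sum_range_succ]
    simp
  rw [hdecomp, hdecomp2] at hki
  rw [length_lowA, length_highA]
  have hmin : min 1 (core H (D.S D.s)).card ≤ 1 := min_le_left _ _
  omega

end Lists
section Position

open List

variable {α : Type*} [Fintype α] {H : SimpleGraph α}

lemma not_adj_u_next (D : DSeq H) {i : ℕ} (h1 : 1 ≤ i) (h2 : i < D.s) {w : α}
    (hw : w ∈ D.S (i+1)) : ¬ H.Adj (D.u i) w := ((mem_S_succ D h1 h2).mp hw).2.2

lemma low_idx_lt (D : DSeq H) {t : ℕ} (ht : t < D.s - 1) {x : α} (hx : x ∈ NBk D (t+1)) :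
    (lowA D).idxOf x < ∑ t' ∈ Finset.range (t+1), D.d (t'+1) := by
  have hs := D.hs
  have hxt : x ∈ (NBk D (t+1)).toList := Finset.mem_toList.mpr hx
  have hxl : x ∈ (List.range (D.s-1)).flatMap (fun t => (NBk D (t+1)).toList) :=
    List.mem_flatMap.mpr ⟨t, List.mem_range.mpr ht, hxt⟩
  unfold lowA
  rw [List.idxOf_append_of_mem hxl]
  obtain ⟨rest, hr⟩ := flatMap_prefix (fun t => (NBk D (t+1)).toList)
    (show t+1 ≤ D.s - 1 from ht)
  rw [hr]
  have hx2 : x ∈ (List.range (t+1)).flatMap (fun t => (NBk D (t+1)).toList) :=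
    List.mem_flatMap.mpr ⟨t, List.mem_range.mpr (Nat.lt_succ_self t), hxt⟩
  rw [List.idxOf_append_of_mem hx2]
  calc ((List.range (t+1)).flatMap (fun t => (NBk D (t+1)).toList)).idxOf x
      < ((List.range (t+1)).flatMap (fun t => (NBk D (t+1)).toList)).length :=
        List.idxOf_lt_length_iff.mpr hx2
    _ = ∑ t' ∈ Finset.range (t+1), D.d (t'+1) := by
        rw [len_flatMap]
        apply Finset.sum_congr rfl
        intro t' ht'
        have ht'2 := Finset.mem_range.mp ht'
        rw [Finset.length_toList, ← d_eq D (by omega) (by omega)]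

lemma not_mem_high_block (D : DSeq H) {t : ℕ} (h2 : t + 1 < D.s) {w : α}
    (hw : w ∈ D.S (t+2)) :
    w ∉ (isolSet H (D.S (t+1))).toList ++ [D.u (t+1)] := by
  have hmem := (mem_S_succ D (by omega) h2).mp hw
  intro hm
  rcases List.mem_append.mp hm with h | h
  · exact (mem_core_iff.mp hmem.1).2 (Finset.mem_toList.mp h)
  · exact hmem.2.1 (List.mem_singleton.mp h)

lemma not_mem_high_flat' (D : DSeq H) {j : ℕ} (hj : j + 1 ≤ D.s) {w : α}
    (hw : w ∈ D.S (j+1)) :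
    w ∉ (List.range j).flatMap
      (fun t => (isolSet H (D.S (t+1))).toList ++ [D.u (t+1)]) := by
  intro hm
  obtain ⟨t, htr, htm⟩ := List.mem_flatMap.mp hm
  have ht := List.mem_range.mp htr
  have hws : w ∈ D.S (t+2) := S_sub D (j := t+2) (by omega) (j+1) (by omega) hj hw
  exact not_mem_high_block D (by omega) hws htm

lemma not_mem_high_flat (D : DSeq H) {w : α} (hw : w ∈ D.S D.s) :
    w ∉ (List.range (D.s - 1)).flatMap
      (fun t => (isolSet H (D.S (t+1))).toList ++ [D.u (t+1)]) := by
  intro hm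
  obtain ⟨t, htr, htm⟩ := List.mem_flatMap.mp hm
  have ht := List.mem_range.mp htr
  have hs := D.hs
  have hws : w ∈ D.S (t+2) := S_sub D (j := t+2) (by omega) D.s (by omega) le_rfl hw
  exact not_mem_high_block D (by omega) hws htm

lemma len_high_flat (D : DSeq H) (j : ℕ) (hj : j ≤ D.s - 1) :
    ((List.range j).flatMap
      (fun t => (isolSet H (D.S (t+1))).toList ++ [D.u (t+1)])).length
      = ∑ t ∈ Finset.range j, (D.m (t+1) + 1) := by
  rw [len_flatMap]
  apply Finset.sum_congr rfl
  intro t _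
  rw [List.length_append, Finset.length_toList]
  rfl

lemma high_idx_ge (D : DSeq H) {j : ℕ} (hj : j < D.s - 1) {y : α}
    (hyb : y ∈ (isolSet H (D.S (j+1))).toList ++ [D.u (j+1)]) (hyS : y ∈ D.S (j+1)) :
    ∑ t ∈ Finset.range j, (D.m (t+1) + 1) ≤ (highA D).idxOf y := by
  have hs := D.hs
  have hyflat : y ∈ (List.range (D.s-1)).flatMap
      (fun t => (isolSet H (D.S (t+1))).toList ++ [D.u (t+1)]) :=
    List.mem_flatMap.mpr ⟨j, List.mem_range.mpr hj, hyb⟩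
  unfold highA
  rw [List.idxOf_append_of_mem (List.mem_append_left _ hyflat),
      List.idxOf_append_of_mem hyflat]
  obtain ⟨rest, hr⟩ := flatMap_block
    (fun t => (isolSet H (D.S (t+1))).toList ++ [D.u (t+1)]) hj
  rw [hr, List.idxOf_append_of_notMem (not_mem_high_flat' D (by omega) hyS),
    len_high_flat D j (by omega)]
  omega

lemma high_idx_u (D : DSeq H) {j : ℕ} (hj : j < D.s - 1) :
    ∑ t ∈ Finset.range j, (D.m (t+1) + 1) + D.m (j+1)
      ≤ (highA D).idxOf (D.u (j+1)) := by
  have hs := D.hs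
  have hyb : D.u (j+1) ∈ (isolSet H (D.S (j+1))).toList ++ [D.u (j+1)] :=
    List.mem_append_right _ (List.mem_singleton.mpr rfl)
  have hyS : D.u (j+1) ∈ D.S (j+1) := u_mem_S D (by omega) (by omega)
  have hyflat : D.u (j+1) ∈ (List.range (D.s-1)).flatMap
      (fun t => (isolSet H (D.S (t+1))).toList ++ [D.u (t+1)]) :=
    List.mem_flatMap.mpr ⟨j, List.mem_range.mpr hj, hyb⟩
  unfold highA
  rw [List.idxOf_append_of_mem (List.mem_append_left _ hyflat),
      List.idxOf_append_of_mem hyflat]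
  obtain ⟨rest, hr⟩ := flatMap_block
    (fun t => (isolSet H (D.S (t+1))).toList ++ [D.u (t+1)]) hj
  rw [hr, List.idxOf_append_of_notMem (not_mem_high_flat' D (by omega) hyS),
    len_high_flat D j (by omega), List.append_assoc,
    List.idxOf_append_of_notMem
      (fun hmem => u_not_isol D (by omega : 1 ≤ j+1) (by omega)
        (Finset.mem_toList.mp hmem)),
    Finset.length_toList]
  have hm : D.m (j+1) = (isolSet H (D.S (j+1))).card := rfl
  omega

lemma high_idx_tail (D : DSeq H) {y : α} (hyS : y ∈ D.S D.s) :
    ∑ t ∈ Finset.range (D.s - 1), (D.m (t+1) + 1) ≤ (highA D).idxOf y := by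
  unfold highA
  rw [List.append_assoc,
    List.idxOf_append_of_notMem (not_mem_high_flat D hyS),
    len_high_flat D (D.s - 1) le_rfl]
  omega

lemma high_idx_head (D : DSeq H) {y : α} (hy : y ∈ (core H (D.S D.s)).toList.take 1) :
    (highA D).idxOf y + 1 = (highA D).length := by
  have hyC : y ∈ core H (D.S D.s) := Finset.mem_toList.mp (List.mem_of_mem_take hy)
  have hyS : y ∈ D.S D.s := core_subset hyC
  have h1 : (core H (D.S D.s)).toList.take 1 = [y] :=
    singleton_of_mem_short hy (by rw [List.length_take]; omega)
  unfold highA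
  rw [List.append_assoc,
    List.idxOf_append_of_notMem (not_mem_high_flat D hyS),
    List.idxOf_append_of_notMem
      (fun hmem => (mem_core_iff.mp hyC).2 (Finset.mem_toList.mp hmem)),
    h1, List.idxOf_cons_self, List.length_append, List.length_append]
  simp only [List.length_singleton]
  omega

lemma low_mem_cases (D : DSeq H) {a : α} (ha : a ∈ lowA D) :
    (∃ t, t < D.s - 1 ∧ a ∈ NBk D (t+1)) ∨
      (a ∈ core H (D.S D.s) ∧ a ∈ (core H (D.S D.s)).toList.drop 1) := by
  unfold lowA at ha
  rcases List.mem_append.mp ha with h | h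
  · obtain ⟨t, htr, htm⟩ := List.mem_flatMap.mp h
    exact Or.inl ⟨t, List.mem_range.mp htr, Finset.mem_toList.mp htm⟩
  · exact Or.inr ⟨Finset.mem_toList.mp (List.mem_of_mem_drop h), h⟩

lemma high_mem_cases (D : DSeq H) {b : α} (hb : b ∈ highA D) :
    (∃ j, j < D.s - 1 ∧ b ∈ isolSet H (D.S (j+1))) ∨
    (∃ j, j < D.s - 1 ∧ b = D.u (j+1)) ∨
    (b ∈ isolSet H (D.S D.s)) ∨
    (b ∈ (core H (D.S D.s)).toList.take 1) := by
  unfold highA at hb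
  rcases List.mem_append.mp hb with h | h
  · rcases List.mem_append.mp h with h | h
    · obtain ⟨t, htr, htm⟩ := List.mem_flatMap.mp h
      rcases List.mem_append.mp htm with h2 | h2
      · exact Or.inl ⟨t, List.mem_range.mp htr, Finset.mem_toList.mp h2⟩
      · exact Or.inr (Or.inl ⟨t, List.mem_range.mp htr, List.mem_singleton.mp h2⟩)
    · exact Or.inr (Or.inr (Or.inl (Finset.mem_toList.mp h)))
  · exact Or.inr (Or.inr (Or.inr h))

lemma high_class (D : DSeq H) {b : α} (hb : b ∈ highA D) :
    (∃ i, 1 ≤ i ∧ i ≤ D.s ∧ b ∈ isolSet H (D.S i)) ∨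
    (∃ i, 1 ≤ i ∧ i < D.s ∧ b = D.u i) ∨
    (b ∈ core H (D.S D.s) ∧ b ∈ (core H (D.S D.s)).toList.take 1) := by
  have hs := D.hs
  rcases high_mem_cases D hb with ⟨j,hj,h⟩ | ⟨j,hj,h⟩ | h | h
  · exact Or.inl ⟨j+1, by omega, by omega, h⟩
  · exact Or.inr (Or.inl ⟨j+1, by omega, by omega, h⟩)
  · exact Or.inl ⟨D.s, hs, le_rfl, h⟩
  · exact Or.inr (Or.inr ⟨Finset.mem_toList.mp (List.mem_of_mem_take h), h⟩)

lemma no_high_adj (D : DSeq H) {a b : α} (ha : a ∈ highA D) (hb : b ∈ highA D)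
    (hadj : H.Adj a b) : False := by
  have hs := D.hs
  rcases high_class D ha with ⟨i,hi1,hi2,hia⟩ | ⟨i,hi1,hi2,hia⟩ | ⟨hac, hat⟩ <;>
    rcases high_class D hb with ⟨j,hj1,hj2,hjb⟩ | ⟨j,hj1,hj2,hjb⟩ | ⟨hbc, hbt⟩
  · rcases le_total i j with h | h
    · exact isol_not_adj hia (S_sub D hi1 j h hj2 (isolSet_subset hjb)) hadj
    · exact isol_not_adj hjb (S_sub D hj1 i h hi2 (isolSet_subset hia)) hadj.symm
  · subst hjb
    rcases le_or_gt i j with h | h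
    · exact isol_not_adj hia (S_sub D hi1 j h (le_of_lt hj2) (u_mem_S D hj1 hj2)) hadj
    · exact not_adj_u_next D hj1 hj2
        (S_sub D (by omega) i (by omega) hi2 (isolSet_subset hia)) hadj.symm
  · exact isol_not_adj hia (S_sub D hi1 D.s hi2 le_rfl (core_subset hbc)) hadj
  · subst hia
    rcases le_or_gt j i with h | h
    · exact isol_not_adj hjb (S_sub D hj1 i h (le_of_lt hi2) (u_mem_S D hi1 hi2)) hadj.symm
    · exact not_adj_u_next D hi1 hi2
        (S_sub D (by omega) j (by omega) hj2 (isolSet_subset hjb)) hadj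
  · subst hia; subst hjb
    rcases lt_trichotomy i j with h | h | h
    · exact not_adj_u_next D hi1 hi2
        (S_sub D (by omega) j (by omega) (le_of_lt hj2) (u_mem_S D hj1 hj2)) hadj
    · subst h; exact H.loopless.irrefl _ hadj
    · exact not_adj_u_next D hj1 hj2
        (S_sub D (by omega) i (by omega) (le_of_lt hi2) (u_mem_S D hi1 hi2)) hadj.symm
  · subst hia
    exact not_adj_u_next D hi1 hi2
      (S_sub D (by omega) D.s (by omega) le_rfl (core_subset hbc)) hadj
  · exact isol_not_adj hjb (S_sub D hj1 D.s hj2 le_rfl (core_subset hac)) hadj.symm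
  · subst hjb
    exact not_adj_u_next D hj1 hj2
      (S_sub D (by omega) D.s (by omega) le_rfl (core_subset hac)) hadj.symm
  · have h1 : (core H (D.S D.s)).toList.take 1 = [a] :=
      singleton_of_mem_short hat (by rw [List.length_take]; omega)
    rw [h1] at hbt
    rw [List.mem_singleton.mp hbt] at hadj
    exact H.loopless.irrefl _ hadj

lemma key_ineq (D : DSeq H) {Z : ℤ}
    (hZ : IsLeast {z | ∃ i, 2 ≤ i ∧ i ≤ D.s ∧ z = D.z i} Z)
    (hZ0 : Z ≤ 0) {k : ℕ} (hk : (D.d 1 : ℤ) - Z ≤ (k : ℤ)) {a b : α}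
    (ha : a ∈ lowA D) (hb : b ∈ highA D) (hadj : H.Adj a b) :
    1 + (lowA D).idxOf a ≤ k + (highA D).idxOf b := by
  have hs := D.hs
  have hlen := length_ineq D hZ hZ0 hk
  rcases low_mem_cases D ha with ⟨t, ht, hat⟩ | ⟨hac, had⟩
  · have haS : a ∈ D.S (t+1) := (mem_NBk.mp hat).1
    have hidxa := low_idx_lt D ht hat
    have hki := ki D hZ hZ0 hk (t+1) (by omega) (by omega)
    rcases high_mem_cases D hb with ⟨j, hj, hjb⟩ | ⟨j, hj, hjb⟩ | hjb | hjb
    · -- b isolated at step j+1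
      have htj : t < j := by
        by_contra hcon
        push_neg at hcon
        have haj : a ∈ D.S (j+1) := S_sub D (by omega) (t+1) (by omega) (by omega) haS
        exact isol_not_adj hjb haj hadj.symm
      have hidxb := high_idx_ge D hj
        (List.mem_append_left _ (Finset.mem_toList.mpr hjb)) (isolSet_subset hjb)
      have hsplit : ∑ t' ∈ Finset.range j, (D.m (t'+1) + 1)
          = (∑ t' ∈ Finset.range j, D.m (t'+1)) + j := by
        rw [Finset.sum_add_distrib, Finset.sum_const, Finset.card_range, smul_eq_mul, mul_one]
      have hmono : ∑ t' ∈ Finset.range (t+1), D.m (t'+1)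
          ≤ ∑ t' ∈ Finset.range j, D.m (t'+1) :=
        Finset.sum_le_sum_of_subset (Finset.range_subset_range.mpr (by omega))
      omega
    · -- b = u (j+1)
      subst hjb
      have htj : t ≤ j := by
        by_contra hcon
        push_neg at hcon
        have haj : a ∈ D.S (j+2) := S_sub D (by omega) (t+1) (by omega) (by omega) haS
        exact not_adj_u_next D (by omega) (by omega) haj hadj.symm
      have hidxb := high_idx_u D hj
      have hsplit : ∑ t' ∈ Finset.range j, (D.m (t'+1) + 1) + D.m (j+1)
          = (∑ t' ∈ Finset.range (j+1), D.m (t'+1)) + j := by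
        rw [Finset.sum_add_distrib, Finset.sum_const, Finset.card_range, smul_eq_mul,
          mul_one, Finset.sum_range_succ]
        omega
      have hmono : ∑ t' ∈ Finset.range (t+1), D.m (t'+1)
          ≤ ∑ t' ∈ Finset.range (j+1), D.m (t'+1) :=
        Finset.sum_le_sum_of_subset (Finset.range_subset_range.mpr (by omega))
      omega
    · -- b isolated at terminal step
      have hidxb := high_idx_tail D (isolSet_subset hjb)
      have hsplit : ∑ t' ∈ Finset.range (D.s - 1), (D.m (t'+1) + 1)
          = (∑ t' ∈ Finset.range (D.s - 1), D.m (t'+1)) + (D.s - 1) := by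
        rw [Finset.sum_add_distrib, Finset.sum_const, Finset.card_range, smul_eq_mul, mul_one]
      have hmono : ∑ t' ∈ Finset.range (t+1), D.m (t'+1)
          ≤ ∑ t' ∈ Finset.range (D.s - 1), D.m (t'+1) :=
        Finset.sum_le_sum_of_subset (Finset.range_subset_range.mpr (by omega))
      omega
    · -- b is the clique representative
      have hidxb := high_idx_head D hjb
      have hmin : min 1 (core H (D.S D.s)).card = 1 := by
        have hne : (core H (D.S D.s)).Nonempty :=
          ⟨b, Finset.mem_toList.mp (List.mem_of_mem_take hjb)⟩
        have := Finset.card_pos.mpr hne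
        omega
      have hidxa2 : (lowA D).idxOf a < (lowA D).length := List.idxOf_lt_length_iff.mpr ha
      omega
  · -- a in the clique
    have haS : a ∈ D.S D.s := core_subset hac
    rcases high_mem_cases D hb with ⟨j, hj, hjb⟩ | ⟨j, hj, hjb⟩ | hjb | hjb
    · exact absurd hadj.symm
        (isol_not_adj hjb (S_sub D (by omega) D.s (by omega) le_rfl haS))
    · subst hjb
      exact absurd hadj.symm
        (not_adj_u_next D (by omega) (by omega)
          (S_sub D (by omega) D.s (by omega) le_rfl haS))
    · exact absurd hadj.symm (isol_not_adj hjb haS)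
    · have hidxb := high_idx_head D hjb
      have hmin : min 1 (core H (D.S D.s)).card = 1 := by
        have := Finset.card_pos.mpr ⟨a, hac⟩
        omega
      have hidxa2 : (lowA D).idxOf a < (lowA D).length := List.idxOf_lt_length_iff.mpr ha
      omega

lemma mem_low_or_high (D : DSeq H) (a : α) : a ∈ lowA D ∨ a ∈ highA D := by
  have hs := D.hs
  by_contra hcon
  push_neg at hcon
  obtain ⟨hl, hh⟩ := hcon
  have key : ∀ i, 1 ≤ i → i ≤ D.s → a ∈ D.S i := by
    intro i
    induction i with
    | zero => omega
    | succ n ih =>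
      intro h1 h2
      rcases Nat.lt_or_ge n 1 with hn | hn
      · have : n = 0 := by omega
        subst this
        rw [D.first]
        exact Finset.mem_univ a
      · have han : a ∈ D.S n := ih hn (by omega)
        have hn_lt : n < D.s := by omega
        have hrw : n - 1 + 1 = n := by omega
        have hnotisol : a ∉ isolSet H (D.S n) := by
          intro hiso
          apply hh
          unfold highA
          refine List.mem_append_left _ (List.mem_append_left _ ?_)
          refine List.mem_flatMap.mpr ⟨n - 1, List.mem_range.mpr (by omega), ?_⟩
          rw [hrw]
          exact List.mem_append_left _ (Finset.mem_toList.mpr hiso)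
        have hne_u : a ≠ D.u n := by
          intro he
          apply hh
          unfold highA
          refine List.mem_append_left _ (List.mem_append_left _ ?_)
          refine List.mem_flatMap.mpr ⟨n - 1, List.mem_range.mpr (by omega), ?_⟩
          rw [hrw]
          exact List.mem_append_right _ (List.mem_singleton.mpr he)
        have hnotNB : a ∉ NBk D n := by
          intro hnb
          apply hl
          unfold lowA
          refine List.mem_append_left _ ?_
          refine List.mem_flatMap.mpr ⟨n - 1, List.mem_range.mpr (by omega), ?_⟩
          rw [hrw]
          exact Finset.mem_toList.mpr hnb
        rw [mem_S_succ D hn hn_lt]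
        exact ⟨mem_core_iff.mpr ⟨han, hnotisol⟩, hne_u,
          fun hadj => hnotNB (mem_NBk.mpr ⟨han, hadj⟩)⟩
  have has : a ∈ D.S D.s := key D.s hs le_rfl
  by_cases hiso : a ∈ isolSet H (D.S D.s)
  · exact hh (by
      unfold highA
      exact List.mem_append_left _ (List.mem_append_right _ (Finset.mem_toList.mpr hiso)))
  · have hc : a ∈ (core H (D.S D.s)).toList :=
      Finset.mem_toList.mpr (mem_core_iff.mpr ⟨has, hiso⟩)
    rw [← List.take_append_drop 1 (core H (D.S D.s)).toList] at hc
    rcases List.mem_append.mp hc with h | h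
    · exact hh (by unfold highA; exact List.mem_append_right _ h)
    · exact hl (by unfold lowA; exact List.mem_append_right _ h)

end Position
/-- Let `H` be a graph with `δ(H) ≥ 1` having a d-sequence with minimal partial sum
`Z ≤ 0`, and let `G = H + K_{1,k}`. If `k ≥ d_H - Z`, then `str(G) = |V(G)| + 1`. -/
theorem strength_sum_star {α : Type*} [Fintype α]
    (H : SimpleGraph α) [DecidableRel H.Adj] (hδH : 1 ≤ H.minDegree)
    (DH : DSeq H) (Z : ℤ)
    (hZ : IsLeast {z | ∃ i, 2 ≤ i ∧ i ≤ DH.s ∧ z = DH.z i} Z) (hZ0 : Z ≤ 0)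
    (k : ℕ) (hk : (DH.d 1 : ℤ) - Z ≤ (k : ℤ)) :
    strength (H ⊕g starGraph k) = Fintype.card (α ⊕ Option (Fin k)) + 1 := by
  classical
  letI dEqV : DecidableEq (α ⊕ Option (Fin k)) := Classical.decEq _
  letI beqV : BEq (α ⊕ Option (Fin k)) := @instBEqOfDecidableEq _ dEqV
  have hs := DH.hs
  obtain ⟨i₀, hi₀2, hi₀s, -⟩ := hZ.1
  have hs2 : 2 ≤ DH.s := le_trans hi₀2 hi₀s
  -- `d 1 ≥ 1` and hence `k ≥ 1`
  have hu1 : DH.u 1 ∈ core H (DH.S 1) := DH.mem_u 1 le_rfl (by omega)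
  have hnb1 : ∃ w, w ∈ NBk DH 1 := by
    have h2 := (mem_core_iff.mp hu1).2
    simp only [mem_isolSet] at h2
    push_neg at h2
    obtain ⟨w, hw1, hw2⟩ := h2 (core_subset hu1)
    exact ⟨w, mem_NBk.mpr ⟨hw1, hw2⟩⟩
  obtain ⟨w1, hw1⟩ := hnb1
  have hd1 : 1 ≤ DH.d 1 := by
    rw [d_eq DH le_rfl (by omega)]
    exact Finset.card_pos.mpr ⟨w1, hw1⟩
  have hk1 : 1 ≤ k := by
    have h1 : (DH.d 1 : ℤ) ≤ (k : ℤ) := by linarith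
    have h2 : DH.d 1 ≤ k := by exact_mod_cast h1
    omega
  set p := Fintype.card (α ⊕ Option (Fin k)) with hp
  have hpcard : p = Fintype.card α + (k + 1) := by
    rw [hp, Fintype.card_sum, Fintype.card_option, Fintype.card_fin]
  -- every vertex of `H` has a neighbour
  have hnbH : ∀ a : α, ∃ b, H.Adj a b := fun a =>
    (H.degree_pos_iff_exists_adj a).mp
      (lt_of_lt_of_le Nat.zero_lt_one (le_trans hδH (H.minDegree_le_degree a)))
  -- generic lower bound for any numbering
  have hLB : ∀ g : (α ⊕ Option (Fin k)) → ℕ, IsNumbering g →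
      p + 1 ≤ strOf (H ⊕g starGraph k) g := by
    intro g hg
    have hple : 1 ≤ p := by omega
    obtain ⟨v, -, hv⟩ := hg.2.2 (Set.mem_Icc.mpr ⟨hple, le_rfl⟩)
    obtain ⟨w, hw⟩ : ∃ w, (H ⊕g starGraph k).Adj v w := by
      match v with
      | Sum.inl a =>
        obtain ⟨b, hb⟩ := hnbH a
        exact ⟨Sum.inl b, by simpa using hb⟩
      | Sum.inr none =>
        refine ⟨Sum.inr (some ⟨0, by omega⟩), ?_⟩
        have : (starGraph k).Adj none (some ⟨0, by omega⟩) := trivial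
        simpa using this
      | Sum.inr (some i) =>
        refine ⟨Sum.inr none, ?_⟩
        have : (starGraph k).Adj (some i) none := trivial
        simpa using this
    have hwmem := hg.1 (Set.mem_univ w)
    rw [Set.mem_Icc] at hwmem
    have hbdd : BddAbove {n | ∃ x y, (H ⊕g starGraph k).Adj x y ∧ n = g x + g y} := by
      refine ⟨2 * p, ?_⟩
      rintro n ⟨x, y, hxy, rfl⟩
      have hx := hg.1 (Set.mem_univ x)
      have hy := hg.1 (Set.mem_univ y)
      rw [Set.mem_Icc] at hx hy
      omega
    have hmem : g v + g w ∈ {n | ∃ x y, (H ⊕g starGraph k).Adj x y ∧ n = g x + g y} :=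
      ⟨v, w, hw, rfl⟩
    have hle := le_csSup hbdd hmem
    unfold strOf
    omega
  -- the lists of low and high vertices
  set L : List (α ⊕ Option (Fin k)) := Sum.inr none :: (lowA DH).map Sum.inl with hL
  set Hh : List (α ⊕ Option (Fin k)) :=
    ((List.finRange k).map fun i => Sum.inr (some i)) ++ (highA DH).map Sum.inl with hHh
  have hlenL : L.length = 1 + (lowA DH).length := by
    rw [hL, List.length_cons, List.length_map]; omega
  have hlenH : Hh.length = k + (highA DH).length := by
    rw [hHh, List.length_append, List.length_map, List.length_map, List.length_finRange]
  have hlenLH : L.length + Hh.length = p := by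
    rw [hlenL, hlenH, hpcard]
    have := length_total DH
    omega
  have hcov : ∀ v : α ⊕ Option (Fin k), v ∈ L ∨ v ∈ Hh := by
    intro v
    match v with
    | Sum.inl a =>
      rcases mem_low_or_high DH a with h | h
      · exact Or.inl (List.mem_cons_of_mem _ (List.mem_map_of_mem h))
      · exact Or.inr (List.mem_append_right _ (List.mem_map_of_mem h))
    | Sum.inr none => exact Or.inl (List.mem_cons_self)
    | Sum.inr (some i) =>
      exact Or.inr (List.mem_append_left _ (List.mem_map_of_mem (List.mem_finRange i)))
  have hnodup : (L ++ Hh).Nodup := by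
    have hsub : (Finset.univ : Finset (α ⊕ Option (Fin k))).toList ⊆ L ++ Hh := by
      intro v _
      rcases hcov v with h | h
      · exact List.mem_append_left _ h
      · exact List.mem_append_right _ h
    have hsp := List.subperm_of_subset (Finset.nodup_toList _) hsub
    have hlen2 : (L ++ Hh).length ≤
        (Finset.univ : Finset (α ⊕ Option (Fin k))).toList.length := by
      rw [List.length_append, hlenLH, Finset.length_toList, Finset.card_univ]
    exact (hsp.perm_of_length_le hlen2).nodup (Finset.nodup_toList _)
  have hnodL : L.Nodup := hnodup.of_append_left
  have hnodH : Hh.Nodup := hnodup.of_append_right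
  have hdisj : ∀ v, v ∈ L → v ∈ Hh → False := fun v h1 h2 =>
    List.disjoint_of_nodup_append hnodup h1 h2
  -- the numbering
  set f : (α ⊕ Option (Fin k)) → ℕ :=
    fun v => if v ∈ L then L.idxOf v + 1 else p - Hh.idxOf v with hf
  have hfL : ∀ v ∈ L, f v = L.idxOf v + 1 := by
    intro v hv
    rw [hf]
    exact if_pos hv
  have hfLle : ∀ v ∈ L, 1 ≤ f v ∧ f v ≤ L.length := by
    intro v hv
    rw [hfL v hv]
    have := List.idxOf_lt_length_iff.mpr hv
    omega
  have hfH : ∀ v ∈ Hh, f v = p - Hh.idxOf v := by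
    intro v hv
    rw [hf]
    exact if_neg (fun hvL => hdisj v hvL hv)
  have hfHge : ∀ v ∈ Hh, L.length + 1 ≤ f v ∧ f v ≤ p := by
    intro v hv
    rw [hfH v hv]
    have := List.idxOf_lt_length_iff.mpr hv
    omega
  have hnum : IsNumbering f := by
    refine ⟨?_, ?_, ?_⟩
    · intro v _
      rw [← hp]
      rcases hcov v with h | h
      · have h1 := hfLle v h
        exact Set.mem_Icc.mpr ⟨h1.1, by omega⟩
      · have h1 := hfHge v h
        exact Set.mem_Icc.mpr ⟨by omega, h1.2⟩
    · intro x _ y _ hxy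
      rcases hcov x with hx | hx <;> rcases hcov y with hy | hy
      · have h1 := hfL x hx
        have h2 := hfL y hy
        refine (List.idxOf_inj hx).mp ?_
        omega
      · have h1 := hfLle x hx
        have h2 := hfHge y hy
        omega
      · have h1 := hfHge x hx
        have h2 := hfLle y hy
        omega
      · have h1 := hfH x hx
        have h2 := hfH y hy
        have hx2 : Hh.idxOf x < Hh.length := List.idxOf_lt_length_iff.mpr hx
        have hy2 : Hh.idxOf y < Hh.length := List.idxOf_lt_length_iff.mpr hy
        refine (List.idxOf_inj hx).mp ?_
        omega
    · intro n hn
      rw [← hp] at hn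
      obtain ⟨h1n, hnp⟩ := Set.mem_Icc.mp hn
      by_cases hcase : n ≤ L.length
      · have hlt : n - 1 < L.length := by omega
        refine ⟨L[n-1]'hlt, Set.mem_univ _, ?_⟩
        have hmem : L[n-1]'hlt ∈ L := List.getElem_mem hlt
        rw [hfL _ hmem, List.Nodup.idxOf_getElem hnodL]
        omega
      · have hidx : p - n < Hh.length := by omega
        refine ⟨Hh[p-n]'hidx, Set.mem_univ _, ?_⟩
        have hmem : Hh[p-n]'hidx ∈ Hh := List.getElem_mem hidx
        rw [hfH _ hmem, List.Nodup.idxOf_getElem hnodH]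
        omega
  -- the crucial edge bound
  have hEB : ∀ x y, (H ⊕g starGraph k).Adj x y → f x + f y ≤ p + 1 := by
    have hmixed : ∀ a b : α, a ∈ lowA DH → b ∈ highA DH → H.Adj a b →
        f (Sum.inl a) + f (Sum.inl b) ≤ p + 1 := by
      intro a b ha hb hadj
      have hkey := key_ineq DH hZ hZ0 hk ha hb hadj
      have haL : (Sum.inl a : α ⊕ Option (Fin k)) ∈ L :=
        List.mem_cons_of_mem _ (List.mem_map_of_mem ha)
      have hbH : (Sum.inl b : α ⊕ Option (Fin k)) ∈ Hh :=
        List.mem_append_right _ (List.mem_map_of_mem hb)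
      have hidxa : L.idxOf (Sum.inl a) = (lowA DH).idxOf a + 1 := by
        rw [hL, List.idxOf_cons_ne _ (by simp : (Sum.inr none : α ⊕ Option (Fin k)) ≠ Sum.inl a),
          indexOf_map_inl]
      have hidxb : Hh.idxOf (Sum.inl b) = k + (highA DH).idxOf b := by
        rw [hHh, List.idxOf_append_of_notMem (by simp), indexOf_map_inl,
          List.length_map, List.length_finRange]
      have hblt : Hh.idxOf (Sum.inl b) < Hh.length := List.idxOf_lt_length_iff.mpr hbH
      have hHp : Hh.length ≤ p := by omega
      rw [hfL _ haL, hfH _ hbH, hidxa, hidxb]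
      rw [hidxb] at hblt
      omega
    intro x y hxy
    match x, y with
    | Sum.inl a, Sum.inl b =>
      have hadj : H.Adj a b := by simpa using hxy
      rcases mem_low_or_high DH a with ha | ha <;> rcases mem_low_or_high DH b with hb | hb
      · have haL : (Sum.inl a : α ⊕ Option (Fin k)) ∈ L :=
          List.mem_cons_of_mem _ (List.mem_map_of_mem ha)
        have hbL : (Sum.inl b : α ⊕ Option (Fin k)) ∈ L :=
          List.mem_cons_of_mem _ (List.mem_map_of_mem hb)
        have hfa := hfL _ haL
        have hfb := hfL _ hbL
        have hne : (Sum.inl a : α ⊕ Option (Fin k)) ≠ Sum.inl b := by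
          simp only [ne_eq, Sum.inl.injEq]
          exact hadj.ne
        have hij : L.idxOf (Sum.inl a : α ⊕ Option (Fin k)) ≠ L.idxOf (Sum.inl b) :=
          fun h => hne ((List.idxOf_inj haL).mp h)
        have h1 : L.idxOf (Sum.inl a : α ⊕ Option (Fin k)) < L.length :=
          List.idxOf_lt_length_iff.mpr haL
        have h2 : L.idxOf (Sum.inl b : α ⊕ Option (Fin k)) < L.length :=
          List.idxOf_lt_length_iff.mpr hbL
        have hLlen : L.length ≤ Hh.length + 1 := by
          have h3 := length_ineq DH hZ hZ0 hk
          rw [hlenL, hlenH]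
          omega
        omega
      · exact hmixed a b ha hb hadj
      · have := hmixed b a hb ha hadj.symm
        omega
      · exact (no_high_adj DH ha hb hadj).elim
    | Sum.inl a, Sum.inr o => exact absurd hxy (by simp)
    | Sum.inr o, Sum.inl a => exact absurd hxy (by simp)
    | Sum.inr o1, Sum.inr o2 =>
      have hstar : (starGraph k).Adj o1 o2 := by simpa using hxy
      match o1, o2 with
      | none, none => exact (hstar : False).elim
      | some i, some j => exact (hstar : False).elim
      | none, some i =>
        have h1 : f (Sum.inr none) = 1 := by
          rw [hfL _ (List.mem_cons_self), hL, List.idxOf_cons_self]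
        have h2 := hfHge _ ((hcov (Sum.inr (some i))).resolve_left (fun hmem => by
          rw [hL] at hmem
          rcases List.mem_cons.mp hmem with h | h
          · exact absurd h (by simp)
          · obtain ⟨c, -, hc⟩ := List.mem_map.mp h
            exact absurd hc (by simp)))
        omega
      | some i, none =>
        have h1 : f (Sum.inr none) = 1 := by
          rw [hfL _ (List.mem_cons_self), hL, List.idxOf_cons_self]
        have h2 := hfHge _ ((hcov (Sum.inr (some i))).resolve_left (fun hmem => by
          rw [hL] at hmem
          rcases List.mem_cons.mp hmem with h | h
          · exact absurd h (by simp)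
          · obtain ⟨c, -, hc⟩ := List.mem_map.mp h
            exact absurd hc (by simp)))
        omega
  -- `strOf f = p + 1`
  have hEne : {n | ∃ x y, (H ⊕g starGraph k).Adj x y ∧ n = f x + f y}.Nonempty := by
    refine ⟨f (Sum.inl (DH.u 1)) + f (Sum.inl w1), Sum.inl (DH.u 1), Sum.inl w1, ?_, rfl⟩
    have := (mem_NBk.mp hw1).2
    simpa using this
  have hstrle : strOf (H ⊕g starGraph k) f ≤ p + 1 := by
    unfold strOf
    apply csSup_le hEne
    rintro n ⟨x, y, hxy, rfl⟩
    exact hEB x y hxy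
  have hstr : strOf (H ⊕g starGraph k) f = p + 1 := le_antisymm hstrle (hLB f hnum)
  have hmem2 : p + 1 ∈ {n | ∃ g, IsNumbering g ∧ strOf (H ⊕g starGraph k) g = n} :=
    ⟨f, hnum, hstr⟩
  unfold strength
  apply le_antisymm
  · exact Nat.sInf_le hmem2
  · apply le_csInf ⟨_, hmem2⟩
    rintro n ⟨g, hgn, rfl⟩
    exact hLB g hgn
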